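/- Let J_n be the cylinder of α ∈ (0,1] whose first n Σ-entries equal a fixed admissible sequence σ_1,…,σ_n, and let J_{n+1}[s·t^ζ] ⊂ J_n be the subcylinder where additionally the (n+1)-st Σ-entry equals (s,(t,ζ)). Then the ratio of Lebesgue measures satisfies 1/(30 (s+1)² t²) ≤ |J_{n+1}[s·t^ζ]| / |J_n| ≤ 6/((s+1)² t²). -/

import Mathlib

open MeasureTheory

/-- The branch interval `B(k,ξ)` of the even-continued-fraction map. -/
noncomputable def Bset (k : ℕ) (ξ : ℤ) : Set ℝ :=
  if ξ = 1 then Set.Ioc (1 / (2 * (k:ℝ) + 1)) (1 / (2 * (k:ℝ)))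
  else Set.Ioc (1 / (2 * (k:ℝ))) (1 / (2 * (k:ℝ) - 1))

namespace ECFaux

structure M4 where
  a : ℤ
  b : ℤ
  c : ℤ
  d : ℤ

def mul (X Y : M4) : M4 :=
  ⟨X.a * Y.a + X.b * Y.c, X.a * Y.b + X.b * Y.d,
   X.c * Y.a + X.d * Y.c, X.c * Y.b + X.d * Y.d⟩

def idm : M4 := ⟨1, 0, 0, 1⟩

def dmat (k : ℕ) (ε : ℤ) : M4 := ⟨0, 1, ε, 2 * k⟩

def mat : List (ℕ × ℤ) → M4
  | [] => idm
  | (k, ε) :: L => mul (dmat k ε) (mat L)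

@[simp] lemma mul_idm (X : M4) : mul X idm = X := by
  cases X; simp [mul, idm]

@[simp] lemma idm_mul (X : M4) : mul idm X = X := by
  cases X; simp [mul, idm]

lemma mul_assoc' (X Y Z : M4) : mul (mul X Y) Z = mul X (mul Y Z) := by
  cases X; cases Y; cases Z; simp only [mul, M4.mk.injEq]; refine ⟨by ring, by ring, by ring, by ring⟩

lemma mat_append (L L' : List (ℕ × ℤ)) : mat (L ++ L') = mul (mat L) (mat L') := by
  induction L with
  | nil => simp [mat]
  | cons p L ih => cases p with
    | mk k ε => simp [mat, ih, mul_assoc']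

def Valid (L : List (ℕ × ℤ)) : Prop := ∀ p ∈ L, 1 ≤ p.1 ∧ (p.2 = 1 ∨ p.2 = -1)

/-- basic invariant for any valid digit list -/
def Inv (X : M4) : Prop :=
  1 ≤ X.d ∧ 1 ≤ X.c + X.d ∧ 0 ≤ X.b ∧ X.b ≤ X.d ∧ 0 ≤ X.a + X.b ∧
    X.a + X.b ≤ X.c + X.d ∧ (X.a * X.d - X.b * X.c = 1 ∨ X.a * X.d - X.b * X.c = -1)

lemma inv_mat {L : List (ℕ × ℤ)} (hL : Valid L) : Inv (mat L) := by
  induction L with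
  | nil => simp [mat, idm, Inv]
  | cons p L ih =>
    obtain ⟨k, ε⟩ := p
    have hp := hL (k, ε) (List.mem_cons_self)
    have hk : (1:ℤ) ≤ (k:ℤ) := by exact_mod_cast hp.1
    have hε := hp.2
    have hI := ih (fun q hq => hL q (List.mem_cons_of_mem _ hq))
    obtain ⟨h1, h2, h3, h4, h5, h6, h7⟩ := hI
    simp only [mat, mul, dmat, Inv] at *
    rcases hε with hε | hε <;> subst hε <;>
      refine ⟨by nlinarith, by nlinarith, by nlinarith, by nlinarith, by nlinarith,
        by nlinarith, ?_⟩
    · rcases h7 with h7 | h7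
      · right; linear_combination -h7
      · left; linear_combination -h7
    · rcases h7 with h7 | h7
      · left; linear_combination h7
      · right; linear_combination h7



noncomputable def gmap : List (ℕ × ℤ) → ℝ → ℝ
  | [], y => y
  | (k, ε) :: L, y => 1 / (2 * (k:ℝ) + (ε:ℝ) * gmap L y)

/-- real denominator/numerator positivity from the integer invariant -/
lemma denom_pos {X : M4} (hX : Inv X) {y : ℝ} (h0 : 0 ≤ y) (h1 : y ≤ 1) :
    0 < (X.c:ℝ) * y + X.d := by
  obtain ⟨i1, i2, -, -, -, -, -⟩ := hX
  have i1' : (1:ℝ) ≤ X.d := by exact_mod_cast i1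
  have i2' : (1:ℝ) ≤ X.c + X.d := by exact_mod_cast i2
  nlinarith

lemma num_bounds {X : M4} (hX : Inv X) {y : ℝ} (h0 : 0 ≤ y) (h1 : y ≤ 1) :
    0 ≤ (X.a:ℝ) * y + X.b ∧ (X.a:ℝ) * y + X.b ≤ (X.c:ℝ) * y + X.d := by
  obtain ⟨i1, i2, i3, i4, i5, i6, -⟩ := hX
  have i3' : (0:ℝ) ≤ X.b := by exact_mod_cast i3
  have i4' : (X.b:ℝ) ≤ X.d := by exact_mod_cast i4
  have i5' : (0:ℝ) ≤ X.a + X.b := by exact_mod_cast i5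
  have i6' : (X.a:ℝ) + X.b ≤ X.c + X.d := by exact_mod_cast i6
  constructor <;> nlinarith

/-- The composed inverse branch is the Möbius map with matrix `mat L` on `[0,1]`. -/
lemma gmap_eq {L : List (ℕ × ℤ)} (hL : Valid L) {y : ℝ} (h0 : 0 ≤ y) (h1 : y ≤ 1) :
    gmap L y = ((mat L).a * y + (mat L).b) / ((mat L).c * y + (mat L).d) := by
  induction L with
  | nil => simp [gmap, mat, idm]
  | cons p L ih =>
    obtain ⟨k, ε⟩ := p
    have hp := hL (k, ε) (List.mem_cons_self)
    have hk : (1:ℝ) ≤ (k:ℝ) := by exact_mod_cast hp.1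
    have hLt : Valid L := fun q hq => hL q (List.mem_cons_of_mem _ hq)
    have hI := inv_mat hLt
    have hd := denom_pos hI h0 h1
    have hn := num_bounds hI h0 h1
    have hg : gmap L y = ((mat L).a * y + (mat L).b) / ((mat L).c * y + (mat L).d) :=
      ih hLt
    have hg0 : 0 ≤ gmap L y := by rw [hg]; exact div_nonneg hn.1 hd.le
    have hg1 : gmap L y ≤ 1 := by rw [hg]; exact (div_le_one hd).2 hn.2
    have hε' : (ε:ℝ) = 1 ∨ (ε:ℝ) = -1 := by
      rcases hp.2 with h | h <;> [left; right] <;> exact_mod_cast h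
    have hden2 : 0 < 2 * (k:ℝ) + (ε:ℝ) * gmap L y := by
      rcases hε' with h | h <;> rw [h] <;> nlinarith
    have hgA : 0 < 2 * (k:ℝ) + (ε:ℝ) * (((mat L).a * y + (mat L).b) / ((mat L).c * y + (mat L).d)) := by
      rw [← hg]; exact hden2
    show 1 / (2 * (k:ℝ) + (ε:ℝ) * gmap L y) = _
    simp only [mat, mul, dmat]
    push_cast
    rw [hg]
    have hprod := mul_pos hgA hd
    have hkey : (2 * (k:ℝ) + (ε:ℝ) * (((mat L).a * y + (mat L).b) / ((mat L).c * y + (mat L).d)))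
        * ((mat L).c * y + (mat L).d)
        = 2 * (k:ℝ) * ((mat L).c * y + (mat L).d) + (ε:ℝ) * ((mat L).a * y + (mat L).b) := by
      have := ne_of_gt hd
      rw [add_mul, mul_assoc (ε:ℝ), div_mul_cancel₀ _ this]
    have hd3 : 0 < 2 * (k:ℝ) * ((mat L).c * y + (mat L).d)
        + (ε:ℝ) * ((mat L).a * y + (mat L).b) := hkey ▸ hprod
    rw [div_eq_div_iff (ne_of_gt hgA) (by nlinarith [hd3] : ((ε:ℝ) * (mat L).a + 2 * (k:ℝ) * (mat L).c) * y + ((ε:ℝ) * (mat L).b + 2 * (k:ℝ) * (mat L).d) ≠ 0)]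
    field_simp
    ring


section Tpart

variable {T : ℝ → ℝ}

lemma branch_fwd (hT1 : ∀ k : ℕ, 1 ≤ k → ∀ α ∈ Set.Ioc (1 / (2 * (k:ℝ))) (1 / (2 * (k:ℝ) - 1)),
      T α = 2 * (k:ℝ) - 1 / α)
    (hT2 : ∀ k : ℕ, 1 ≤ k → ∀ α ∈ Set.Ioc (1 / (2 * (k:ℝ) + 1)) (1 / (2 * (k:ℝ))),
      T α = 1 / α - 2 * (k:ℝ))
    {k : ℕ} (hk : 1 ≤ k) {ε : ℤ} (hε : ε = 1 ∨ ε = -1) {z : ℝ} (hz : z ∈ Set.Ioo (0:ℝ) 1) :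
    1 / (2 * (k:ℝ) + (ε:ℝ) * z) ∈ Bset k ε ∧ 1 / (2 * (k:ℝ) + (ε:ℝ) * z) ∈ Set.Ioo (0:ℝ) 1 ∧
      T (1 / (2 * (k:ℝ) + (ε:ℝ) * z)) = z := by
  obtain ⟨hz0, hz1⟩ := hz
  have hk' : (1:ℝ) ≤ (k:ℝ) := by exact_mod_cast hk
  rcases hε with hε | hε <;> subst hε
  · have hden : (0:ℝ) < 2 * k + 1 * z := by nlinarith
    have h1 : 1 / (2 * (k:ℝ) + 1) < 1 / (2 * (k:ℝ) + 1 * z) := by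
      apply one_div_lt_one_div_of_lt <;> nlinarith
    have h2 : 1 / (2 * (k:ℝ) + 1 * z) ≤ 1 / (2 * (k:ℝ)) := by
      apply one_div_le_one_div_of_le <;> nlinarith
    have hmem : 1 / (2 * (k:ℝ) + 1 * z) ∈ Set.Ioc (1 / (2 * (k:ℝ) + 1)) (1 / (2 * (k:ℝ))) :=
      ⟨h1, h2⟩
    have hB : 1 / (2 * (k:ℝ) + 1 * z) ∈ Bset k 1 := by
      simpa [Bset] using hmem
    refine ⟨by exact_mod_cast hB, ⟨by positivity, ?_⟩, ?_⟩
    · push_cast; rw [div_lt_one hden]; nlinarith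
    · have := hT2 k hk _ hmem
      rw [show ((1:ℤ):ℝ) = 1 by norm_num]
      rw [this, one_div_one_div]; ring
  · have hden : (0:ℝ) < 2 * k + (-1 : ℤ) * z := by push_cast; nlinarith
    have hden' : (0:ℝ) < 2 * k - z := by nlinarith
    have hcast : 2 * (k:ℝ) + ((-1 : ℤ):ℝ) * z = 2 * (k:ℝ) - z := by push_cast; ring
    rw [hcast]
    have h1 : 1 / (2 * (k:ℝ)) < 1 / (2 * (k:ℝ) - z) := by
      apply one_div_lt_one_div_of_lt <;> nlinarith
    have h2 : 1 / (2 * (k:ℝ) - z) ≤ 1 / (2 * (k:ℝ) - 1) := by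
      apply one_div_le_one_div_of_le <;> nlinarith
    have hmem : 1 / (2 * (k:ℝ) - z) ∈ Set.Ioc (1 / (2 * (k:ℝ))) (1 / (2 * (k:ℝ) - 1)) :=
      ⟨h1, h2⟩
    have hB : 1 / (2 * (k:ℝ) - z) ∈ Bset k (-1) := by
      simp only [Bset, if_neg (by norm_num : (-1 : ℤ) ≠ 1)]
      exact hmem
    refine ⟨hB, ⟨by positivity, ?_⟩, ?_⟩
    · rw [div_lt_one hden']; nlinarith
    · have := hT1 k hk _ hmem
      rw [this, one_div_one_div]; ring

lemma branch_bwd (hT1 : ∀ k : ℕ, 1 ≤ k → ∀ α ∈ Set.Ioc (1 / (2 * (k:ℝ))) (1 / (2 * (k:ℝ) - 1)),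
      T α = 2 * (k:ℝ) - 1 / α)
    (hT2 : ∀ k : ℕ, 1 ≤ k → ∀ α ∈ Set.Ioc (1 / (2 * (k:ℝ) + 1)) (1 / (2 * (k:ℝ))),
      T α = 1 / α - 2 * (k:ℝ))
    {k : ℕ} (hk : 1 ≤ k) {ε : ℤ} (hε : ε = 1 ∨ ε = -1) {α : ℝ} (hα : α ∈ Bset k ε) :
    0 ≤ T α ∧ T α ≤ 1 ∧ 1 / (2 * (k:ℝ) + (ε:ℝ) * T α) = α := by
  have hk' : (1:ℝ) ≤ (k:ℝ) := by exact_mod_cast hk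
  rcases hε with hε | hε <;> subst hε
  · have hmem : α ∈ Set.Ioc (1 / (2 * (k:ℝ) + 1)) (1 / (2 * (k:ℝ))) := by
      simpa [Bset] using hα
    obtain ⟨h1, h2⟩ := hmem
    have hαpos : 0 < α := lt_trans (by positivity) h1
    have hup : 1 < α * (2 * (k:ℝ) + 1) := by
      rw [div_lt_iff₀ (by positivity)] at h1; linarith
    have hlo : α * (2 * (k:ℝ)) ≤ 1 := by
      rw [le_div_iff₀ (by positivity)] at h2; linarith
    have hTα := hT2 k hk α ⟨h1, h2⟩
    have hinv : 1 / α * α = 1 := by field_simp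
    refine ⟨?_, ?_, ?_⟩
    · rw [hTα]; rw [sub_nonneg, le_div_iff₀ hαpos]; linarith
    · rw [hTα]; rw [sub_le_iff_le_add, div_le_iff₀ hαpos]; nlinarith
    · rw [hTα]
      rw [show ((1:ℤ):ℝ) = 1 by norm_num]
      have : 2 * (k:ℝ) + 1 * (1 / α - 2 * (k:ℝ)) = 1 / α := by ring
      rw [this, one_div_one_div]
  · have hmem : α ∈ Set.Ioc (1 / (2 * (k:ℝ))) (1 / (2 * (k:ℝ) - 1)) := by
      simp only [Bset, if_neg (by norm_num : (-1 : ℤ) ≠ 1)] at hα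
      exact hα
    obtain ⟨h1, h2⟩ := hmem
    have hαpos : 0 < α := lt_trans (by positivity) h1
    have hup : 1 < α * (2 * (k:ℝ)) := by
      rw [div_lt_iff₀ (by positivity)] at h1; linarith
    have hlo : α * (2 * (k:ℝ) - 1) ≤ 1 := by
      rw [le_div_iff₀ (by nlinarith : (0:ℝ) < 2 * (k:ℝ) - 1)] at h2; linarith
    have hTα := hT1 k hk α ⟨h1, h2⟩
    refine ⟨?_, ?_, ?_⟩
    · rw [hTα]; rw [sub_nonneg, div_le_iff₀ hαpos]; nlinarith
    · rw [hTα]; rw [sub_le_iff_le_add, ← sub_le_iff_le_add', le_div_iff₀ hαpos]; nlinarith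
    · rw [hTα]
      have : 2 * (k:ℝ) + ((-1 : ℤ):ℝ) * (2 * (k:ℝ) - 1 / α) = 1 / α := by push_cast; ring
      rw [this, one_div_one_div]

/-- the digit condition of a list -/
def DigCond (T : ℝ → ℝ) (L : List (ℕ × ℤ)) (α : ℝ) : Prop :=
  ∀ p, p < L.length → T^[p] α ∈ Bset (L.getD p (1,1)).1 (L.getD p (1,1)).2

lemma gmap_mem_cyl (hT1 : ∀ k : ℕ, 1 ≤ k → ∀ α ∈ Set.Ioc (1 / (2 * (k:ℝ))) (1 / (2 * (k:ℝ) - 1)),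
      T α = 2 * (k:ℝ) - 1 / α)
    (hT2 : ∀ k : ℕ, 1 ≤ k → ∀ α ∈ Set.Ioc (1 / (2 * (k:ℝ) + 1)) (1 / (2 * (k:ℝ))),
      T α = 1 / α - 2 * (k:ℝ))
    {L : List (ℕ × ℤ)} (hL : Valid L) {y : ℝ} (hy : y ∈ Set.Ioo (0:ℝ) 1) :
    gmap L y ∈ Set.Ioo (0:ℝ) 1 ∧ DigCond T L (gmap L y) ∧ T^[L.length] (gmap L y) = y := by
  induction L with
  | nil =>
    refine ⟨hy, ?_, rfl⟩
    intro p hp; simp at hp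
  | cons q L ih =>
    obtain ⟨k, ε⟩ := q
    have hq := hL (k, ε) (List.mem_cons_self)
    have hLt : Valid L := fun r hr => hL r (List.mem_cons_of_mem _ hr)
    obtain ⟨hzIoo, hzdig, hziter⟩ := ih hLt
    obtain ⟨hB, hIoo, hTz⟩ := branch_fwd hT1 hT2 hq.1 hq.2 hzIoo
    have hgc : gmap ((k, ε) :: L) y = 1 / (2 * (k:ℝ) + (ε:ℝ) * gmap L y) := rfl
    rw [hgc]
    refine ⟨hIoo, ?_, ?_⟩
    · intro p hp
      match p with
      | 0 => simpa using hB
      | Nat.succ p =>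
        rw [Function.iterate_succ_apply, hTz]
        simp only [List.getD_cons_succ]
        exact hzdig p (by simpa using hp)
    · show T^[L.length + 1] _ = y
      rw [Function.iterate_succ_apply, hTz, hziter]

lemma cyl_to_gmap (hT1 : ∀ k : ℕ, 1 ≤ k → ∀ α ∈ Set.Ioc (1 / (2 * (k:ℝ))) (1 / (2 * (k:ℝ) - 1)),
      T α = 2 * (k:ℝ) - 1 / α)
    (hT2 : ∀ k : ℕ, 1 ≤ k → ∀ α ∈ Set.Ioc (1 / (2 * (k:ℝ) + 1)) (1 / (2 * (k:ℝ))),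
      T α = 1 / α - 2 * (k:ℝ))
    {L : List (ℕ × ℤ)} (hL : Valid L) {α : ℝ} (hα0 : 0 ≤ α) (hα1 : α ≤ 1)
    (hd : DigCond T L α) :
    0 ≤ T^[L.length] α ∧ T^[L.length] α ≤ 1 ∧ gmap L (T^[L.length] α) = α := by
  induction L generalizing α with
  | nil => exact ⟨hα0, hα1, rfl⟩
  | cons q L ih =>
    obtain ⟨k, ε⟩ := q
    have hq := hL (k, ε) (List.mem_cons_self)
    have hLt : Valid L := fun r hr => hL r (List.mem_cons_of_mem _ hr)
    have hB : α ∈ Bset k ε := by simpa using hd 0 (by simp)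
    obtain ⟨hT0, hT1', hinv⟩ := branch_bwd hT1 hT2 hq.1 hq.2 hB
    have hdt : DigCond T L (T α) := by
      intro p hp
      rw [← Function.iterate_succ_apply]
      simpa using hd (p+1) (by simpa using Nat.succ_lt_succ hp)
    obtain ⟨j0, j1, jg⟩ := ih hLt hT0 hT1' hdt
    have hit : T^[((k,ε) :: L).length] α = T^[L.length] (T α) := by
      show T^[L.length + 1] α = _
      rw [Function.iterate_succ_apply]
    rw [hit]
    refine ⟨j0, j1, ?_⟩
    show 1 / (2 * (k:ℝ) + (ε:ℝ) * gmap L (T^[L.length] (T α))) = α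
    rw [jg, hinv]


lemma vol_cyl (hT1 : ∀ k : ℕ, 1 ≤ k → ∀ α ∈ Set.Ioc (1 / (2 * (k:ℝ))) (1 / (2 * (k:ℝ) - 1)),
      T α = 2 * (k:ℝ) - 1 / α)
    (hT2 : ∀ k : ℕ, 1 ≤ k → ∀ α ∈ Set.Ioc (1 / (2 * (k:ℝ) + 1)) (1 / (2 * (k:ℝ))),
      T α = 1 / α - 2 * (k:ℝ))
    {L : List (ℕ × ℤ)} (hL : Valid L) :
    volume (Set.Ioc (0:ℝ) 1 ∩ {α | DigCond T L α})
      = ENNReal.ofReal (1 / (((mat L).d : ℝ) * (((mat L).c : ℝ) + ((mat L).d : ℝ)))) := by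
  have hI := inv_mat hL
  obtain ⟨i1, i2, i3, i4, i5, i6, idet⟩ := inv_mat hL
  have hd : (0:ℝ) < ((mat L).d : ℝ) := by exact_mod_cast lt_of_lt_of_le zero_lt_one i1
  have hP : (0:ℝ) < ((mat L).c : ℝ) + ((mat L).d : ℝ) := by
    exact_mod_cast lt_of_lt_of_le zero_lt_one i2
  set g0 : ℝ := ((mat L).b : ℝ) / ((mat L).d : ℝ) with hg0def
  set g1 : ℝ := (((mat L).a : ℝ) + ((mat L).b : ℝ)) / (((mat L).c : ℝ) + ((mat L).d : ℝ))
    with hg1def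
  have hcont : ContinuousOn (gmap L) (Set.Icc (0:ℝ) 1) := by
    refine ContinuousOn.congr (f := fun y : ℝ =>
      (((mat L).a : ℝ) * y + ((mat L).b : ℝ)) / (((mat L).c : ℝ) * y + ((mat L).d : ℝ))) ?_ ?_
    · apply ContinuousOn.div (by fun_prop) (by fun_prop)
      intro y hy
      exact ne_of_gt (denom_pos hI hy.1 hy.2)
    · intro y hy
      exact gmap_eq hL hy.1 hy.2
  have hgm0 : gmap L 0 = g0 := by
    rw [gmap_eq hL le_rfl zero_le_one, hg0def]; norm_num
  have hgm1 : gmap L 1 = g1 := by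
    rw [gmap_eq hL zero_le_one le_rfl, hg1def]; norm_num
  set m : ℝ := min g0 g1
  set M : ℝ := max g0 g1
  have hbound : ∀ y : ℝ, 0 ≤ y → y ≤ 1 →
      m ≤ (((mat L).a : ℝ) * y + ((mat L).b : ℝ)) / (((mat L).c : ℝ) * y + ((mat L).d : ℝ)) ∧
      (((mat L).a : ℝ) * y + ((mat L).b : ℝ)) / (((mat L).c : ℝ) * y + ((mat L).d : ℝ)) ≤ M := by
    intro y hy0 hy1
    have hdy := denom_pos hI hy0 hy1
    rcases idet with hdet | hdet
    · have hdet' : ((mat L).a : ℝ) * ((mat L).d : ℝ) - ((mat L).b : ℝ) * ((mat L).c : ℝ) = 1 := by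
        exact_mod_cast hdet
      constructor
      · refine le_trans (min_le_left _ _) ?_
        rw [hg0def, div_le_div_iff₀ hd hdy]; nlinarith
      · refine le_trans ?_ (le_max_right _ _)
        rw [hg1def, div_le_div_iff₀ hdy hP]; nlinarith
    · have hdet' : ((mat L).a : ℝ) * ((mat L).d : ℝ) - ((mat L).b : ℝ) * ((mat L).c : ℝ) = -1 := by
        exact_mod_cast hdet
      constructor
      · refine le_trans (min_le_right _ _) ?_
        rw [hg1def, div_le_div_iff₀ hP hdy]; nlinarith
      · refine le_trans ?_ (le_max_left _ _)
        rw [hg0def, div_le_div_iff₀ hdy hd]; nlinarith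
  have hMm : M - m = 1 / (((mat L).d : ℝ) * (((mat L).c : ℝ) + ((mat L).d : ℝ))) := by
    rcases idet with hdet | hdet
    · have hdet' : ((mat L).a : ℝ) * ((mat L).d : ℝ) - ((mat L).b : ℝ) * ((mat L).c : ℝ) = 1 := by
        exact_mod_cast hdet
      have hdiff : g1 - g0 = 1 / (((mat L).d : ℝ) * (((mat L).c : ℝ) + ((mat L).d : ℝ))) := by
        rw [hg0def, hg1def]; field_simp; linear_combination hdet'
      have hlt : g0 ≤ g1 := by nlinarith [hdiff, one_div_pos.2 (mul_pos hd hP)]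
      have : M = g1 := max_eq_right hlt
      have h2 : m = g0 := min_eq_left hlt
      rw [this, h2]; linarith [hdiff]
    · have hdet' : ((mat L).a : ℝ) * ((mat L).d : ℝ) - ((mat L).b : ℝ) * ((mat L).c : ℝ) = -1 := by
        exact_mod_cast hdet
      have hdiff : g0 - g1 = 1 / (((mat L).d : ℝ) * (((mat L).c : ℝ) + ((mat L).d : ℝ))) := by
        rw [hg0def, hg1def]; field_simp; linear_combination -hdet'
      have hlt : g1 ≤ g0 := by nlinarith [hdiff, one_div_pos.2 (mul_pos hd hP)]
      have : M = g0 := max_eq_left hlt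
      have h2 : m = g1 := min_eq_right hlt
      rw [this, h2]; linarith [hdiff]
  have hsub1 : Set.Ioo m M ⊆ Set.Ioc (0:ℝ) 1 ∩ {α | DigCond T L α} := by
    intro β hβ
    have himg : β ∈ gmap L '' Set.Ioo (0:ℝ) 1 := by
      rcases le_total g0 g1 with hle | hle
      · have hm : m = g0 := min_eq_left hle
        have hM : M = g1 := max_eq_right hle
        apply intermediate_value_Ioo zero_le_one hcont
        rw [hgm0, hgm1]; rw [hm, hM] at hβ; exact hβ
      · have hm : m = g1 := min_eq_right hle
        have hM : M = g0 := max_eq_left hle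
        apply intermediate_value_Ioo' zero_le_one hcont
        rw [hgm0, hgm1]; rw [hm, hM] at hβ; exact hβ
    obtain ⟨y, hy, hyβ⟩ := himg
    obtain ⟨hIoo, hdig, -⟩ := gmap_mem_cyl hT1 hT2 hL hy
    rw [hyβ] at hIoo hdig
    exact ⟨⟨hIoo.1, hIoo.2.le⟩, hdig⟩
  have hsub2 : Set.Ioc (0:ℝ) 1 ∩ {α | DigCond T L α} ⊆ Set.Icc m M := by
    rintro α ⟨hα, hdig⟩
    obtain ⟨j0, j1, jg⟩ := cyl_to_gmap hT1 hT2 hL hα.1.le hα.2 hdig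
    have := gmap_eq hL j0 j1
    rw [jg] at this
    rw [this]
    exact ⟨(hbound _ j0 j1).1, (hbound _ j0 j1).2⟩
  refine le_antisymm ?_ ?_
  · calc volume (Set.Ioc (0:ℝ) 1 ∩ {α | DigCond T L α}) ≤ volume (Set.Icc m M) :=
          measure_mono hsub2
      _ = ENNReal.ofReal (M - m) := by rw [Real.volume_Icc]
      _ = _ := by rw [hMm]
  · calc ENNReal.ofReal (1 / (((mat L).d : ℝ) * (((mat L).c : ℝ) + ((mat L).d : ℝ))))
        = ENNReal.ofReal (M - m) := by rw [hMm]
      _ = volume (Set.Ioo m M) := by rw [Real.volume_Ioo]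
      _ ≤ _ := measure_mono hsub1

end Tpart

lemma getD_replicate' {x d : ℕ × ℤ} {n p : ℕ} (hp : p < n) :
    (List.replicate n x).getD p d = x := by
  rw [List.getD_eq_getElem _ _ (by simpa using hp)]
  exact List.getElem_replicate ..

def blockL (hh mm : ℕ) (zz : ℤ) : List (ℕ × ℤ) := List.replicate hh (1, -1) ++ [(mm, zz)]

lemma blockL_length (hh mm : ℕ) (zz : ℤ) : (blockL hh mm zz).length = hh + 1 := by
  simp [blockL]

lemma valid_blockL {hh mm : ℕ} {zz : ℤ} (hm : 1 ≤ mm) (hz : zz = 1 ∨ zz = -1) :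
    Valid (blockL hh mm zz) := by
  intro p hp
  simp only [blockL, List.mem_append, List.mem_replicate, List.mem_singleton] at hp
  rcases hp with ⟨-, rfl⟩ | rfl
  · exact ⟨le_refl 1, Or.inr rfl⟩
  · exact ⟨hm, hz⟩

lemma mat_replicate (s : ℕ) :
    mat (List.replicate s (1, -1)) = ⟨1 - (s:ℤ), (s:ℤ), -(s:ℤ), (s:ℤ) + 1⟩ := by
  induction s with
  | zero => simp [mat, idm]
  | succ s ih =>
    rw [List.replicate_succ]
    show mul (dmat 1 (-1)) (mat (List.replicate s (1,-1))) = _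
    rw [ih]
    simp only [mul, dmat, M4.mk.injEq]
    push_cast
    refine ⟨by ring, by ring, by ring, by ring⟩

lemma mat_single (t : ℕ) (z : ℤ) : mat [(t, z)] = ⟨0, 1, z, 2 * (t:ℤ)⟩ := by
  show mul (dmat t z) idm = _
  simp [mul, dmat, idm]

lemma mat_block (s t : ℕ) (z : ℤ) :
    mat (blockL s t z) = ⟨(s:ℤ) * z, 1 - (s:ℤ) + 2 * t * s,
      ((s:ℤ) + 1) * z, 2 * (t:ℤ) * ((s:ℤ) + 1) - s⟩ := by
  rw [blockL, mat_append, mat_replicate, mat_single]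
  simp only [mul, M4.mk.injEq]
  refine ⟨by ring, by ring, by ring, by ring⟩

/-- the invariant at Σ-block boundaries -/
def EInv (X : M4) : Prop :=
  1 ≤ X.d ∧ 1 ≤ X.c + X.d ∧ X.c ≤ X.d ∧ 0 ≤ 3 * X.c + X.d

lemma einv_idm : EInv idm := by
  refine ⟨le_refl 1, ?_, ?_, ?_⟩ <;> simp [idm]

lemma einv_step {X : M4} (hX : EInv X) (hh mm : ℕ) (zz : ℤ) (hm : 1 ≤ mm)
    (hz : zz = 1 ∨ zz = -1) (hadm : ¬(mm = 1 ∧ zz = -1)) :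
    EInv (mul X (mat (blockL hh mm zz))) := by
  obtain ⟨e1, e2, e3, e4⟩ := hX
  rw [mat_block]
  have hh0 : (0:ℤ) ≤ (hh:ℤ) := Int.natCast_nonneg hh
  have hm1 : (1:ℤ) ≤ (mm:ℤ) := by exact_mod_cast hm
  have hA : 1 ≤ (hh:ℤ) * (X.c + X.d) + X.d := by nlinarith
  have hA0 : 0 ≤ (hh:ℤ) * (X.c + X.d) + X.d := by linarith
  have q1 : 0 ≤ (2 * (mm:ℤ) - 2) * ((hh:ℤ) * (X.c + X.d) + X.d) :=
    mul_nonneg (by linarith) hA0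
  have q2 : 1 ≤ (2 * (mm:ℤ) - 1) * ((hh:ℤ) * (X.c + X.d) + X.d) := by
    calc (1:ℤ) = 1 * 1 := by ring
    _ ≤ (2 * (mm:ℤ) - 1) * ((hh:ℤ) * (X.c + X.d) + X.d) :=
        mul_le_mul (by linarith) hA (by norm_num) (by linarith)
  rcases hz with rfl | rfl
  · simp only [mul, EInv]
    refine ⟨by nlinarith [q1, q2], by nlinarith [q1, q2], by nlinarith [q1, q2],
      by nlinarith [q1, q2]⟩
  · have hm2 : (2:ℤ) ≤ (mm:ℤ) := by
      have : mm ≠ 1 := fun hc => hadm ⟨hc, rfl⟩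
      have : 2 ≤ mm := by omega
      exact_mod_cast this
    have q3 : 0 ≤ (2 * (mm:ℤ) - 4) * ((hh:ℤ) * (X.c + X.d) + X.d) + (X.c + X.d) := by
      nlinarith [mul_nonneg (by linarith : (0:ℤ) ≤ 2 * (mm:ℤ) - 4) hA0]
    simp only [mul, EInv]
    refine ⟨by nlinarith [q1, q2, q3], by nlinarith [q1, q2, q3], by nlinarith [q1, q2, q3],
      by nlinarith [q1, q2, q3]⟩

def LL (h m : ℕ → ℕ) (ζ : ℕ → ℤ) : ℕ → List (ℕ × ℤ)
  | 0 => []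
  | n+1 => LL h m ζ n ++ blockL (h (n+1)) (m (n+1)) (ζ (n+1))

lemma LL_length (h m : ℕ → ℕ) (ζ : ℕ → ℤ) (n : ℕ) :
    (LL h m ζ n).length = (∑ i ∈ Finset.range n, h (i+1)) + n := by
  induction n with
  | zero => simp [LL]
  | succ n ih =>
    show (LL h m ζ n ++ blockL (h (n+1)) (m (n+1)) (ζ (n+1))).length = _
    rw [List.length_append, ih, blockL_length, Finset.sum_range_succ]
    ring

lemma valid_LL (h m : ℕ → ℕ) (ζ : ℕ → ℤ) (hm : ∀ j, 1 ≤ m j)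
    (hζ : ∀ j, ζ j = 1 ∨ ζ j = -1) (n : ℕ) : Valid (LL h m ζ n) := by
  induction n with
  | zero => intro p hp; simp [LL] at hp
  | succ n ih =>
    intro p hp
    rcases List.mem_append.1 hp with hp | hp
    · exact ih p hp
    · exact valid_blockL (hm (n+1)) (hζ (n+1)) p hp

lemma einv_LL (h m : ℕ → ℕ) (ζ : ℕ → ℤ) (hm : ∀ j, 1 ≤ m j)
    (hζ : ∀ j, ζ j = 1 ∨ ζ j = -1) (hadm : ∀ j, ¬ (m j = 1 ∧ ζ j = -1)) (n : ℕ) :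
    EInv (mat (LL h m ζ n)) := by
  induction n with
  | zero => exact einv_idm
  | succ n ih =>
    show EInv (mat (LL h m ζ n ++ blockL (h (n+1)) (m (n+1)) (ζ (n+1))))
    rw [mat_append]
    exact einv_step ih _ _ _ (hm (n+1)) (hζ (n+1)) (hadm (n+1))


lemma digcond_append_block (T : ℝ → ℝ) (L : List (ℕ × ℤ)) (hh mm : ℕ) (zz : ℤ) (α : ℝ) :
    DigCond T (L ++ blockL hh mm zz) α ↔
      DigCond T L α ∧
      (∀ i, L.length + 1 ≤ i → i ≤ L.length + hh → T^[i-1] α ∈ Bset 1 (-1)) ∧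
      T^[L.length + hh] α ∈ Bset mm zz := by
  have hlen : (L ++ blockL hh mm zz).length = L.length + (hh + 1) := by
    rw [List.length_append, blockL_length]
  constructor
  · intro H
    refine ⟨?_, ?_, ?_⟩
    · intro p hp
      have hB := H p (by omega)
      rwa [List.getD_append _ _ _ _ hp] at hB
    · intro i h1 h2
      have hB := H (i-1) (by omega)
      rw [List.getD_append_right _ _ _ _ (by omega), blockL,
        List.getD_append _ _ _ _ (by simp; omega), getD_replicate' (by omega)] at hB
      exact hB
    · have hB := H (L.length + hh) (by omega)
      rw [List.getD_append_right _ _ _ _ (by omega),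
        show L.length + hh - L.length = hh by omega, blockL,
        List.getD_append_right _ _ _ _ (by simp), List.length_replicate] at hB
      simpa using hB
  · rintro ⟨H1, H2, H3⟩ p hp
    rw [hlen] at hp
    by_cases hpl : p < L.length
    · rw [List.getD_append _ _ _ _ hpl]; exact H1 p hpl
    · rw [List.getD_append_right _ _ _ _ (by omega)]
      by_cases hq : p - L.length < hh
      · rw [blockL, List.getD_append _ _ _ _ (by simp [hq]), getD_replicate' hq]
        have hB := H2 (p+1) (by omega) (by omega)
        simpa using hB
      · have hpe : p - L.length = hh := by omega
        rw [hpe, blockL, List.getD_append_right _ _ _ _ (by simp), List.length_replicate]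
        have hpp : p = L.length + hh := by omega
        rw [hpp] at *
        simpa using H3

lemma cond_iff (T : ℝ → ℝ) (h m : ℕ → ℕ) (ζ : ℕ → ℤ) (ν : ℕ → ℕ)
    (hν : ∀ j, ν j = (∑ i ∈ Finset.range j, h (i + 1)) + j + 1) (n : ℕ) (α : ℝ) :
    (∀ j, 1 ≤ j → j ≤ n →
      (∀ i, ν (j - 1) ≤ i → i ≤ ν j - 2 → T^[i - 1] α ∈ Bset 1 (-1)) ∧
      T^[ν j - 2] α ∈ Bset (m j) (ζ j)) ↔ DigCond T (LL h m ζ n) α := by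
  induction n with
  | zero =>
    constructor
    · intro _ p hp; simp [LL] at hp
    · intro _ j h1 h2; omega
  | succ n ih =>
    have hLL : LL h m ζ (n+1) = LL h m ζ n ++ blockL (h (n+1)) (m (n+1)) (ζ (n+1)) := rfl
    have hνn : ν n = (LL h m ζ n).length + 1 := by rw [hν, LL_length]
    have hνn' : ν (n + 1 - 1) = (LL h m ζ n).length + 1 := hνn
    have hνn2 : ν (n+1) - 2 = (LL h m ζ n).length + h (n+1) := by
      rw [hν, LL_length, Finset.sum_range_succ]; omega
    rw [hLL, digcond_append_block, ← ih]
    constructor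
    · intro H
      refine ⟨fun j h1 h2 => H j h1 (by omega), ?_, ?_⟩
      · intro i h1 h2
        exact (H (n+1) (by omega) le_rfl).1 i (by omega) (by omega)
      · rw [← hνn2]
        exact (H (n+1) (by omega) le_rfl).2
    · rintro ⟨H1, H2, H3⟩ j h1 h2
      rcases Nat.lt_or_ge j (n+1) with hj | hj
      · exact H1 j h1 (by omega)
      · have hje : j = n + 1 := by omega
        subst hje
        refine ⟨?_, ?_⟩
        · intro i hi1 hi2
          refine H2 i (by omega) (by omega)
        · rw [hνn2]; exact H3

end ECFaux


/- Cylinder measure estimate: if `J_n` is the cylinder of `α ∈ (0,1]` with prescribed first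
`n` Σ-entries `σ_j = (h_j, (m_j, ζ_j))` and `J_{n+1}[s·t^ζ]` the subcylinder where the
`(n+1)`-st Σ-entry is `(s,(t,ζ))`, then
`|J_n|/(30(s+1)²t²) ≤ |J_{n+1}[s·t^ζ]| ≤ 6|J_n|/((s+1)²t²)`. -/
set_option maxHeartbeats 2000000 in
open ECFaux in
/-- Cylinder measure estimate: if `J_n` is the cylinder of `α ∈ (0,1]` with prescribed first
`n` Σ-entries `σ_j = (h_j, (m_j, ζ_j))` and `J_{n+1}[s·t^ζ]` the subcylinder where the
`(n+1)`-st Σ-entry is `(s,(t,ζ))`, then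
`|J_n|/(30(s+1)²t²) ≤ |J_{n+1}[s·t^ζ]| ≤ 6|J_n|/((s+1)²t²)`. -/
theorem cylinder_ratio_bounds (T : ℝ → ℝ)
    (hT1 : ∀ k : ℕ, 1 ≤ k → ∀ α ∈ Set.Ioc (1 / (2 * (k:ℝ))) (1 / (2 * (k:ℝ) - 1)),
      T α = 2 * (k:ℝ) - 1 / α)
    (hT2 : ∀ k : ℕ, 1 ≤ k → ∀ α ∈ Set.Ioc (1 / (2 * (k:ℝ) + 1)) (1 / (2 * (k:ℝ))),
      T α = 1 / α - 2 * (k:ℝ))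
    (n : ℕ) (h m : ℕ → ℕ) (ζ : ℕ → ℤ) (ν : ℕ → ℕ)
    (hν : ∀ j, ν j = (∑ i ∈ Finset.range j, h (i + 1)) + j + 1)
    (hm : ∀ j, 1 ≤ m j) (hζ : ∀ j, ζ j = 1 ∨ ζ j = -1)
    (hadm : ∀ j, ¬ (m j = 1 ∧ ζ j = -1))
    (s t : ℕ) (ζ' : ℤ) (ht : 1 ≤ t) (hζ' : ζ' = 1 ∨ ζ' = -1) (hne : ¬ (t = 1 ∧ ζ' = -1))
    (Jn Jn1 : Set ℝ)
    (hJn : Jn = Set.Ioc 0 1 ∩ {α : ℝ | ∀ j, 1 ≤ j → j ≤ n →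
      (∀ i, ν (j - 1) ≤ i → i ≤ ν j - 2 → T^[i - 1] α ∈ Bset 1 (-1)) ∧
      T^[ν j - 2] α ∈ Bset (m j) (ζ j)})
    (hJn1 : Jn1 = Jn ∩ {α : ℝ |
      (∀ i, ν n ≤ i → i ≤ ν n + s - 1 → T^[i - 1] α ∈ Bset 1 (-1)) ∧
      T^[ν n + s - 1] α ∈ Bset t ζ'}) :
    ENNReal.ofReal (1 / (30 * ((s:ℝ) + 1) ^ 2 * (t:ℝ) ^ 2)) * volume Jn ≤ volume Jn1 ∧
    volume Jn1 ≤ ENNReal.ofReal (6 / (((s:ℝ) + 1) ^ 2 * (t:ℝ) ^ 2)) * volume Jn := by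
  classical
  set L0 := LL h m ζ n with hL0
  have hvalid : Valid L0 := valid_LL h m ζ hm hζ n
  set B := blockL s t ζ' with hBdef
  have hvalidB : Valid (L0 ++ B) := by
    intro p hp
    rcases List.mem_append.1 hp with hp | hp
    · exact hvalid p hp
    · exact valid_blockL ht hζ' p hp
  have hJn' : Jn = Set.Ioc 0 1 ∩ {α : ℝ | DigCond T L0 α} := by
    rw [hJn]
    congr 1
    ext α
    exact cond_iff T h m ζ ν hν n α
  have hνlen : ν n = L0.length + 1 := by rw [hν, hL0, LL_length]
  have hJn1' : Jn1 = Set.Ioc 0 1 ∩ {α : ℝ | DigCond T (L0 ++ B) α} := by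
    rw [hJn1, hJn']
    ext α
    simp only [Set.mem_inter_iff, Set.mem_setOf_eq]
    constructor
    · rintro ⟨⟨hI, hd⟩, he1, he2⟩
      refine ⟨hI, (digcond_append_block T L0 s t ζ' α).2 ⟨hd, ?_, ?_⟩⟩
      · intro i h1 h2; exact he1 i (by omega) (by omega)
      · have he : ν n + s - 1 = L0.length + s := by omega
        rwa [he] at he2
    · rintro ⟨hI, hd⟩
      obtain ⟨h1, h2, h3⟩ := (digcond_append_block T L0 s t ζ' α).1 hd
      refine ⟨⟨hI, h1⟩, ?_, ?_⟩
      · intro i hi1 hi2; exact h2 i (by omega) (by omega)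
      · have he : ν n + s - 1 = L0.length + s := by omega
        rw [he]; exact h3
  -- volumes via vol_cyl
  have hvol0 : volume Jn
      = ENNReal.ofReal (1 / (((mat L0).d : ℝ) * (((mat L0).c : ℝ) + ((mat L0).d : ℝ)))) := by
    rw [hJn']; exact vol_cyl hT1 hT2 hvalid
  have hvol1 : volume Jn1
      = ENNReal.ofReal (1 / (((mat (L0 ++ B)).d : ℝ) *
          (((mat (L0 ++ B)).c : ℝ) + ((mat (L0 ++ B)).d : ℝ)))) := by
    rw [hJn1']; exact vol_cyl hT1 hT2 hvalidB
  -- matrix data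
  have hE : EInv (mat L0) := einv_LL h m ζ hm hζ hadm n
  obtain ⟨e1, e2, e3, e4⟩ := hE
  obtain ⟨i1, i2, -, -, -, -, -⟩ := inv_mat hvalidB
  set Cr : ℝ := ((mat L0).c : ℝ) with hCr
  set Dr : ℝ := ((mat L0).d : ℝ) with hDr
  set F1 : ℝ := ((mat (L0 ++ B)).d : ℝ) with hF1def
  set C1 : ℝ := ((mat (L0 ++ B)).c : ℝ) with hC1def
  have hDr1 : (1:ℝ) ≤ Dr := by rw [hDr]; exact_mod_cast e1
  have hPr1 : (1:ℝ) ≤ Cr + Dr := by rw [hCr, hDr]; exact_mod_cast e2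
  have hCD : Cr ≤ Dr := by rw [hCr, hDr]; exact_mod_cast e3
  have h3CD : (0:ℝ) ≤ 3 * Cr + Dr := by
    have : ((0:ℤ):ℝ) ≤ ((3 * (mat L0).c + (mat L0).d : ℤ) : ℝ) := by exact_mod_cast e4
    push_cast at this; rw [hCr, hDr]; linarith
  have hF1pos : (0:ℝ) < F1 := by
    rw [hF1def]; exact_mod_cast lt_of_lt_of_le zero_lt_one i1
  have hF2pos : (0:ℝ) < C1 + F1 := by
    rw [hC1def, hF1def]; exact_mod_cast lt_of_lt_of_le zero_lt_one i2
  set Pr : ℝ := Cr + Dr with hPrdef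
  set Ar : ℝ := (s:ℝ) * Pr + Dr with hArdef
  have hs0 : (0:ℝ) ≤ (s:ℝ) := Nat.cast_nonneg s
  have ht1 : (1:ℝ) ≤ (t:ℝ) := by exact_mod_cast ht
  have hPr0 : (0:ℝ) < Pr := by linarith
  have hsP : (0:ℝ) ≤ (s:ℝ) * Pr := mul_nonneg hs0 (by linarith)
  have hAr1 : (1:ℝ) ≤ Ar := by rw [hArdef]; linarith
  have hAr0 : (0:ℝ) < Ar := by linarith
  have hP2D : Pr ≤ 2 * Dr := by rw [hPrdef]; linarith
  have h2D3P : 2 * Dr ≤ 3 * Pr := by rw [hPrdef]; linarith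
  have hPA : Pr ≤ 2 * Ar := by rw [hArdef]; linarith
  -- entries of the big matrix
  have hmatB : mat (L0 ++ B) = mul (mat L0) (mat B) := mat_append _ _
  have hF1eq : F1 = (2 * (t:ℝ) - 1) * Ar + Pr := by
    rw [hF1def, hmatB, hBdef, mat_block, hArdef, hPrdef, hCr, hDr]
    simp only [mul]
    push_cast
    ring
  have hC1eq : C1 = (ζ' : ℝ) * Ar := by
    rw [hC1def, hmatB, hBdef, mat_block, hArdef, hPrdef, hCr, hDr]
    simp only [mul]
    push_cast
    ring
  -- bounds on F1 and F2 := C1 + F1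
  have hF1low : (t:ℝ) * Ar ≤ F1 := by
    rw [hF1eq]
    nlinarith [mul_nonneg (by linarith : (0:ℝ) ≤ (t:ℝ) - 1) hAr0.le]
  have hF1up : F1 ≤ (2 * (t:ℝ) + 1) * Ar := by
    rw [hF1eq]; linarith
  have hF2low : (t:ℝ) * Ar ≤ C1 + F1 := by
    rw [hF1eq, hC1eq]
    rcases hζ' with rfl | rfl
    · push_cast
      nlinarith [mul_nonneg (by linarith : (0:ℝ) ≤ (t:ℝ)) hAr0.le]
    · have ht2 : (2:ℝ) ≤ (t:ℝ) := by
        have htne : t ≠ 1 := fun hc => hne ⟨hc, rfl⟩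
        have h2t : 2 ≤ t := by omega
        exact_mod_cast h2t
      push_cast
      nlinarith [mul_nonneg (by linarith : (0:ℝ) ≤ (t:ℝ) - 2) hAr0.le]
  have hF2up : C1 + F1 ≤ (2 * (t:ℝ) + 2) * Ar := by
    rw [hF1eq, hC1eq]
    rcases hζ' with rfl | rfl <;> push_cast <;> linarith
  -- key quadratic estimates
  have key1 : ((s:ℝ) + 1) ^ 2 * (Dr * Pr) ≤ 6 * Ar ^ 2 := by
    rw [hArdef]
    nlinarith [mul_nonneg (mul_nonneg (sq_nonneg (s:ℝ)) hPr0.le)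
        (by linarith : (0:ℝ) ≤ 6 * Pr - Dr),
      mul_nonneg (mul_nonneg hs0 hPr0.le) (by linarith : (0:ℝ) ≤ Dr),
      mul_nonneg (by linarith : (0:ℝ) ≤ Dr) (by linarith : (0:ℝ) ≤ 6 * Dr - Pr)]
  have key2 : 2 * Ar ^ 2 ≤ 5 * ((s:ℝ) + 1) ^ 2 * (Dr * Pr) := by
    rw [hArdef]
    nlinarith [mul_nonneg (mul_nonneg (sq_nonneg (s:ℝ)) hPr0.le)
        (by linarith : (0:ℝ) ≤ 5 * Dr - 2 * Pr),
      mul_nonneg (mul_nonneg hs0 hPr0.le) (by linarith : (0:ℝ) ≤ Dr),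
      mul_nonneg (by linarith : (0:ℝ) ≤ Dr) (by linarith : (0:ℝ) ≤ 5 * Pr - 2 * Dr)]
  -- the two main real inequalities
  have hDPpos : (0:ℝ) < Dr * Pr := by positivity
  have hFFpos : (0:ℝ) < F1 * (C1 + F1) := mul_pos hF1pos hF2pos
  have hu : (0:ℝ) < ((s:ℝ) + 1) ^ 2 * (t:ℝ) ^ 2 := by positivity
  have main_up : ((s:ℝ) + 1) ^ 2 * (t:ℝ) ^ 2 * (Dr * Pr) ≤ 6 * (F1 * (C1 + F1)) := by
    have step1 : ((s:ℝ) + 1) ^ 2 * (t:ℝ) ^ 2 * (Dr * Pr) ≤ 6 * ((t:ℝ) * Ar) ^ 2 := by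
      nlinarith [key1, sq_nonneg (t:ℝ), mul_nonneg (sq_nonneg (t:ℝ))
        (by nlinarith [key1] : (0:ℝ) ≤ 6 * Ar ^ 2 - ((s:ℝ) + 1) ^ 2 * (Dr * Pr))]
    have step2 : ((t:ℝ) * Ar) * ((t:ℝ) * Ar) ≤ F1 * (C1 + F1) :=
      mul_le_mul hF1low hF2low (by positivity) hF1pos.le
    nlinarith [step1, step2]
  have main_lo : F1 * (C1 + F1) ≤ 30 * (((s:ℝ) + 1) ^ 2 * (t:ℝ) ^ 2) * (Dr * Pr) := by
    have step1 : F1 * (C1 + F1) ≤ ((2 * (t:ℝ) + 1) * Ar) * ((2 * (t:ℝ) + 2) * Ar) :=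
      mul_le_mul hF1up hF2up hF2pos.le (by positivity)
    have h8t : (0:ℝ) ≤ 8 * (t:ℝ)^2 - 6 * (t:ℝ) - 2 := by
      nlinarith [mul_nonneg (by linarith : (0:ℝ) ≤ (t:ℝ) - 1) (by linarith : (0:ℝ) ≤ 8 * (t:ℝ) + 2)]
    have step2 : ((2 * (t:ℝ) + 1) * Ar) * ((2 * (t:ℝ) + 2) * Ar) ≤ 12 * (t:ℝ) ^ 2 * Ar ^ 2 := by
      nlinarith [mul_nonneg h8t (sq_nonneg Ar)]
    have step3 : 12 * (t:ℝ) ^ 2 * Ar ^ 2 ≤ 30 * (((s:ℝ) + 1) ^ 2 * (t:ℝ) ^ 2) * (Dr * Pr) := by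
      nlinarith [mul_nonneg (sq_nonneg (t:ℝ)) (by nlinarith [key2] :
        (0:ℝ) ≤ 5 * ((s:ℝ) + 1) ^ 2 * (Dr * Pr) - 2 * Ar ^ 2)]
    linarith
  constructor
  · -- lower bound
    rw [hvol0, hvol1, ← ENNReal.ofReal_mul (by positivity)]
    apply ENNReal.ofReal_le_ofReal
    rw [div_mul_div_comm, one_mul]
    rw [div_le_div_iff₀ (by positivity) hFFpos]
    nlinarith [main_lo]
  · -- upper bound
    rw [hvol0, hvol1, ← ENNReal.ofReal_mul (by positivity)]
    apply ENNReal.ofReal_le_ofReal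
    rw [div_mul_div_comm]
    rw [div_le_div_iff₀ hFFpos (by positivity)]
    nlinarith [main_up]
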